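/- Let p be a free (nonprincipal) ultrafilter on ℕ and let X = ℕ ∪ {p} be the corresponding subspace of βℕ (i.e., ℕ with the discrete topology together with the point p, whose neighborhoods are the sets {p} ∪ A with A ∈ p). Then X admits no countable Pytkeev π-network at p; in particular X has no countable Pytkeev network. -/

import Mathlib

open Set Filter Topology TopologicalSpace

/-- A set `A` accumulates at `x` if every neighborhood of `x` contains
infinitely many points of `A`. -/
def AccumulatesAt {X : Type*} [TopologicalSpace X] (A : Set X) (x : X) : Prop :=
  ∀ U ∈ 𝓝 x, (U ∩ A).Infinite

/-- `𝒩` is a network: for each point and open neighborhood there is a member of `𝒩`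
containing the point and contained in the neighborhood. -/
def IsNetwork {X : Type*} [TopologicalSpace X] (𝒩 : Set (Set X)) : Prop :=
  ∀ (x : X) (U : Set X), IsOpen U → x ∈ U → ∃ N ∈ 𝒩, x ∈ N ∧ N ⊆ U

/-- `𝒩` is a Pytkeev network. -/
def IsPytkeevNetwork {X : Type*} [TopologicalSpace X] (𝒩 : Set (Set X)) : Prop :=
  IsNetwork 𝒩 ∧ ∀ (x : X) (U : Set X), IsOpen U → x ∈ U →
    ∀ A : Set X, AccumulatesAt A x → ∃ N ∈ 𝒩, N ⊆ U ∧ (N ∩ A).Infinite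

/-- `𝒩` is a k-network. -/
def IsKNetwork {X : Type*} [TopologicalSpace X] (𝒩 : Set (Set X)) : Prop :=
  ∀ (U K : Set X), IsOpen U → IsCompact K → K ⊆ U →
    ∃ F ⊆ 𝒩, F.Finite ∧ K ⊆ ⋃₀ F ∧ ⋃₀ F ⊆ U

/-- `𝒩` is a network at the point `x`. -/
def IsNetworkAt {X : Type*} [TopologicalSpace X] (𝒩 : Set (Set X)) (x : X) : Prop :=
  ∀ U : Set X, IsOpen U → x ∈ U → ∃ N ∈ 𝒩, x ∈ N ∧ N ⊆ U

/-- `Pnet` is a Pytkeev π-network at `x`: a network at `x` such that every open neighborhood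
of `x` contains an infinite member of `Pnet`. -/
def IsPytkeevPiNetworkAt {X : Type*} [TopologicalSpace X] (Pnet : Set (Set X)) (x : X) : Prop :=
  IsNetworkAt Pnet x ∧ ∀ U : Set X, IsOpen U → x ∈ U → ∃ N ∈ Pnet, N ⊆ U ∧ N.Infinite

/-- The topology of the space `ℕ ∪ {p}` for an ultrafilter `p` on `ℕ`, realized on
`Option ℕ` with `none` playing the role of `p`: points of `ℕ` are isolated and
the neighborhoods of `p` are the sets `{p} ∪ A` with `A ∈ p`. -/
def ultrafilterTopology (p : Ultrafilter ℕ) : TopologicalSpace (Option ℕ) :=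
  TopologicalSpace.generateFrom
    {S : Set (Option ℕ) | (∃ n : ℕ, S = {Option.some n}) ∨
      ∃ A ∈ p, S = insert none (Option.some '' A)}

noncomputable def mySeq (f : ℕ → Set ℕ) (hf : ∀ n, (f n).Infinite) : ℕ → ℕ
  | 0 => ((hf 0).exists_gt 0).choose
  | n+1 => ((hf ((n+1)/2)).exists_gt (mySeq f hf n)).choose

lemma mySeq_mem (f : ℕ → Set ℕ) (hf : ∀ n, (f n).Infinite) (n : ℕ) :
    mySeq f hf n ∈ f (n / 2) := by
  cases n with
  | zero => exact ((hf 0).exists_gt 0).choose_spec.1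
  | succ m => exact ((hf ((m+1)/2)).exists_gt (mySeq f hf m)).choose_spec.1

lemma mySeq_strictMono (f : ℕ → Set ℕ) (hf : ∀ n, (f n).Infinite) :
    StrictMono (mySeq f hf) := by
  apply strictMono_nat_of_lt_succ
  intro n
  exact ((hf ((n+1)/2)).exists_gt (mySeq f hf n)).choose_spec.2

lemma trace_mem_of_isOpen (p : Ultrafilter ℕ) (U : Set (Option ℕ))
    (hU : @IsOpen _ (ultrafilterTopology p) U) (h0 : none ∈ U) :
    {n : ℕ | Option.some n ∈ U} ∈ p := by
  have hgen : TopologicalSpace.GenerateOpen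
      {S : Set (Option ℕ) | (∃ n : ℕ, S = {Option.some n}) ∨
        ∃ A ∈ p, S = insert none (Option.some '' A)} U := hU
  clear hU
  induction hgen with
  | basic S hS =>
    rcases hS with ⟨n, rfl⟩ | ⟨A, hA, rfl⟩
    · simp at h0
    · refine mem_of_superset hA ?_
      intro a ha
      exact Or.inr ⟨a, ha, rfl⟩
  | univ => exact univ_mem
  | inter S T _ _ ihS ihT => exact inter_mem (ihS h0.1) (ihT h0.2)
  | sUnion 𝒮 _ ih =>
    obtain ⟨S, hS, hSx⟩ := h0
    exact mem_of_superset (ih S hS hSx) (fun n hn => ⟨S, hS, hn⟩)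

lemma free_mem_infinite (p : Ultrafilter ℕ) (hfree : ∀ n : ℕ, ({n} : Set ℕ) ∉ p)
    {A : Set ℕ} (hA : A ∈ p) : A.Infinite := by
  by_contra h
  rw [Set.not_infinite] at h
  obtain ⟨x, _, hpx⟩ := Ultrafilter.eq_pure_of_finite_mem h hA
  exact hfree x (by rw [hpx]; exact rfl)

lemma no_countable_pi (p : Ultrafilter ℕ) (hfree : ∀ n : ℕ, ({n} : Set ℕ) ∉ p)
    (Pnet : Set (Set (Option ℕ))) (hc : Pnet.Countable) :
    ¬ @IsPytkeevPiNetworkAt (Option ℕ) (ultrafilterTopology p) Pnet none := by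
  letI : TopologicalSpace (Option ℕ) := ultrafilterTopology p
  rintro ⟨hnet, hpi⟩
  set S : Set (Set ℕ) := (fun N : Set (Option ℕ) => Option.some ⁻¹' N) '' {N ∈ Pnet | N.Infinite}
    with hSdef
  have hScount : S.Countable := (hc.mono (sep_subset _ _)).image _
  have hSinf : ∀ B ∈ S, B.Infinite := by
    rintro B ⟨N, ⟨hN, hNi⟩, rfl⟩
    by_contra h
    rw [Set.not_infinite] at h
    have hsub : N ⊆ insert none (Option.some '' (Option.some ⁻¹' N)) := by
      intro x hx
      cases x with
      | none => exact mem_insert _ _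
      | some n => exact Or.inr ⟨n, hx, rfl⟩
    exact hNi (Set.Finite.subset ((h.image _).insert none) hsub)
  have hSne : S.Nonempty := by
    obtain ⟨N, hN, _, hNi⟩ := hpi univ isOpen_univ (mem_univ _)
    exact ⟨_, ⟨N, ⟨hN, hNi⟩, rfl⟩⟩
  obtain ⟨f, hf⟩ := Set.Countable.exists_eq_range hScount hSne
  have hfi : ∀ n, (f n).Infinite := fun n => hSinf _ (hf ▸ mem_range_self n)
  set z := mySeq f hfi with hz
  have hzmono := mySeq_strictMono f hfi
  have key : ∃ C ∈ p, ∀ k, ∃ m ∈ f k, m ∉ C := by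
    set D : Set ℕ := range (fun k => z (2*k)) with hD
    set E : Set ℕ := range (fun k => z (2*k+1)) with hE
    have hDmem : ∀ k, z (2*k) ∈ f k := by
      intro k
      have h1 : (2*k)/2 = k := by omega
      have := mySeq_mem f hfi (2*k)
      rwa [h1] at this
    have hEmem : ∀ k, z (2*k+1) ∈ f k := by
      intro k
      have h1 : (2*k+1)/2 = k := by omega
      have := mySeq_mem f hfi (2*k+1)
      rwa [h1] at this
    by_cases hDp : D ∈ p
    · have hEp : E ∉ p := by
        intro hEp
        have hie : D ∩ E ∈ p := inter_mem hDp hEp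
        have : D ∩ E = ∅ := by
          ext m
          simp only [mem_inter_iff, mem_empty_iff_false, iff_false, not_and]
          rintro ⟨i, hi⟩ ⟨j, hj⟩
          have hij : z (2*i) = z (2*j+1) := hi.trans hj.symm
          have := hzmono.injective hij
          omega
        rw [this] at hie
        exact Filter.empty_notMem (p : Filter ℕ) hie
      refine ⟨Eᶜ, (Ultrafilter.compl_mem_iff_notMem).2 hEp, fun k => ⟨z (2*k+1), hEmem k, ?_⟩⟩
      simp only [mem_compl_iff, not_not]
      exact ⟨k, rfl⟩
    · refine ⟨Dᶜ, (Ultrafilter.compl_mem_iff_notMem).2 hDp, fun k => ⟨z (2*k), hDmem k, ?_⟩⟩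
      simp only [mem_compl_iff, not_not]
      exact ⟨k, rfl⟩
  obtain ⟨C, hCp, hC⟩ := key
  have hCopen : IsOpen (insert none (Option.some '' C)) :=
    TopologicalSpace.GenerateOpen.basic _ (Or.inr ⟨C, hCp, rfl⟩)
  obtain ⟨N, hN, hNsub, hNi⟩ := hpi _ hCopen (mem_insert _ _)
  have hmem : (Option.some ⁻¹' N) ∈ S := ⟨N, ⟨hN, hNi⟩, rfl⟩
  rw [hf] at hmem
  obtain ⟨k, hk⟩ := hmem
  obtain ⟨m, hmf, hmC⟩ := hC k
  have hmN : Option.some m ∈ N := by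
    have : m ∈ Option.some ⁻¹' N := hk ▸ hmf
    exact this
  rcases hNsub hmN with h | ⟨a, haC, ha⟩
  · exact nomatch h
  · exact hmC ((Option.some.inj ha) ▸ haC)

theorem ultrafilterSpace_no_countable_pytkeevPiNetwork (p : Ultrafilter ℕ)
    (hfree : ∀ n : ℕ, ({n} : Set ℕ) ∉ p) :
    (∀ Pnet : Set (Set (Option ℕ)), Pnet.Countable →
      ¬ @IsPytkeevPiNetworkAt (Option ℕ) (ultrafilterTopology p) Pnet none) ∧
    ¬ ∃ 𝒩 : Set (Set (Option ℕ)), 𝒩.Countable ∧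
      @IsPytkeevNetwork (Option ℕ) (ultrafilterTopology p) 𝒩 := by
  letI : TopologicalSpace (Option ℕ) := ultrafilterTopology p
  refine ⟨fun Pnet hc => no_countable_pi p hfree Pnet hc, ?_⟩
  rintro ⟨𝒩, hc, hnet, hpyt⟩
  apply no_countable_pi p hfree 𝒩 hc
  constructor
  · exact fun U hU h0 => hnet none U hU h0
  · intro U hU h0
    have hacc : AccumulatesAt (range Option.some) (none : Option ℕ) := by
      intro V hV
      rw [mem_nhds_iff] at hV
      obtain ⟨W, hWV, hWopen, hW0⟩ := hV
      have htr := trace_mem_of_isOpen p W hWopen hW0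
      have hinf := free_mem_infinite p hfree htr
      have himg : Option.some '' {n | Option.some n ∈ W} ⊆ V ∩ range Option.some := by
        rintro x ⟨n, hn, rfl⟩
        exact ⟨hWV hn, ⟨n, rfl⟩⟩
      exact (hinf.image ((Option.some_injective ℕ).injOn)).mono himg
    obtain ⟨N, hN, hNsub, hNinf⟩ := hpyt none U hU h0 _ hacc
    exact ⟨N, hN, hNsub, hNinf.mono inter_subset_left⟩
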